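/- Let K_X and K_Y be real symmetric positive semidefinite M×M matrices with K_X ≠ K_Y, α = Tr K_X, β = Tr K_Y, and participation ratio R_Δ = R(K_X − K_Y) = ‖K_X − K_Y‖_*²/‖K_X − K_Y‖_F². Then the squared Bures distance satisfies d_B(K_X, K_Y)² ≥ (α + β) − √((α + β)² − R_Δ ‖K_X − K_Y‖_F²), where d_B(K_X, K_Y)² = Tr K_X + Tr K_Y − 2 Tr[(K_X^{1/2} K_Y K_X^{1/2})^{1/2}]. -/

import Mathlib

set_option linter.unusedSectionVars false
set_option linter.unusedVariables false
set_option maxHeartbeats 1000000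


open Matrix

/-- The nuclear norm (sum of singular values) of a real matrix, where the singular values are
the square roots of the eigenvalues of `Aᵀ A`. -/
noncomputable def nuclearNorm {m n : Type*} [Fintype m] [Fintype n] [DecidableEq n]
    (A : Matrix m n ℝ) : ℝ :=
  ∑ i, Real.sqrt ((Matrix.isHermitian_conjTranspose_mul_self A).eigenvalues i)

/-- The squared Frobenius norm of a real matrix. -/
def frobSq {m n : Type*} [Fintype m] [Fintype n] (A : Matrix m n ℝ) : ℝ :=
  ∑ i, ∑ j, A i j ^ 2

namespace Matrix.PosSemidef

open scoped ComplexOrder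

/-- The square root of a positive semidefinite matrix (as in the older Mathlib). -/
noncomputable def sqrt {n 𝕜 : Type*} [Fintype n] [DecidableEq n] [RCLike 𝕜] {A : Matrix n n 𝕜}
    (hA : A.PosSemidef) : Matrix n n 𝕜 :=
  hA.1.eigenvectorUnitary.1 * diagonal ((↑) ∘ (√·) ∘ hA.1.eigenvalues) *
    (star hA.1.eigenvectorUnitary : Matrix n n 𝕜)

lemma posSemidef_sqrt {n 𝕜 : Type*} [Fintype n] [DecidableEq n] [RCLike 𝕜] {A : Matrix n n 𝕜}
    (hA : A.PosSemidef) : PosSemidef hA.sqrt := by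
  apply PosSemidef.mul_mul_conjTranspose_same
  refine posSemidef_diagonal_iff.mpr fun i ↦ ?_
  rw [Function.comp_apply, RCLike.nonneg_iff]
  constructor
  · simp only [Function.comp_apply, RCLike.ofReal_re]; exact Real.sqrt_nonneg _
  · simp only [Function.comp_apply, RCLike.ofReal_im]

end Matrix.PosSemidef

lemma sqrt_mul_mul_sqrt_posSemidef {M : ℕ} {KX KY : Matrix (Fin M) (Fin M) ℝ}
    (hX : KX.PosSemidef) (hY : KY.PosSemidef) :
    (hX.sqrt * KY * hX.sqrt).PosSemidef := by
  have h := hY.mul_mul_conjTranspose_same hX.sqrt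
  rwa [hX.posSemidef_sqrt.isHermitian.eq] at h

/-- The fidelity `F(K_X, K_Y) = Tr[(K_X^{1/2} K_Y K_X^{1/2})^{1/2}]` between positive
semidefinite matrices. -/
noncomputable def fidelity {M : ℕ} {KX KY : Matrix (Fin M) (Fin M) ℝ}
    (hX : KX.PosSemidef) (hY : KY.PosSemidef) : ℝ :=
  (sqrt_mul_mul_sqrt_posSemidef hX hY).sqrt.trace

section sqrtPort
open scoped MatrixOrder

lemma Matrix.PosSemidef.sqrt_eq_cfc {n : Type*} [Fintype n] [DecidableEq n] {A : Matrix n n ℝ}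
    (hA : A.PosSemidef) : hA.sqrt = CFC.sqrt A := by
  rw [CFC.sqrt_eq_cfc, cfc_nnreal_eq_real _ A (nonneg_iff_posSemidef.mpr hA), hA.1.cfc_eq]
  simp only [Matrix.IsHermitian.cfc, Matrix.PosSemidef.sqrt, Real.coe_sqrt, Real.coe_toNNReal']
  congr 3
  funext i
  simp [max_eq_left (hA.eigenvalues_nonneg i)]

lemma Matrix.PosSemidef.eq_sqrt_of_sq_eq {n : Type*} [Fintype n] [DecidableEq n]
    {A B : Matrix n n ℝ} (hB : B.PosSemidef) (hA : A.PosSemidef) (h : B ^ 2 = A) :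
    B = hA.sqrt := by
  rw [hA.sqrt_eq_cfc]
  exact (CFC.sqrt_unique (by rw [← sq]; exact h) (nonneg_iff_posSemidef.mpr hB)).symm

lemma Matrix.PosSemidef.sqrt_mul_self {n : Type*} [Fintype n] [DecidableEq n]
    {A : Matrix n n ℝ} (hA : A.PosSemidef) : hA.sqrt * hA.sqrt = A := by
  rw [hA.sqrt_eq_cfc]
  exact CFC.sqrt_mul_sqrt_self A (nonneg_iff_posSemidef.mpr hA)

end sqrtPort


open Matrix

section helpers

variable {n : Type*} [Fintype n] [DecidableEq n]

lemma ct_eq_transpose (A : Matrix n n ℝ) : Aᴴ = Aᵀ := by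
  ext i j; simp [Matrix.conjTranspose_apply]

lemma star_eq_transpose' (A : Matrix n n ℝ) : star A = Aᵀ := by
  rw [Matrix.star_eq_conjTranspose, ct_eq_transpose]

lemma psd_transpose_mul_self (A : Matrix n n ℝ) : (Aᵀ * A).PosSemidef := by
  have := Matrix.posSemidef_conjTranspose_mul_self A
  rwa [ct_eq_transpose] at this

lemma sqrt_congr {A B : Matrix n n ℝ} (h : A = B) (hA : A.PosSemidef) (hB : B.PosSemidef) :
    hA.sqrt = hB.sqrt := by subst h; rfl

lemma conj_psd (V : Matrix n n ℝ) {f : n → ℝ} (hf : ∀ i, 0 ≤ f i) :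
    (V * diagonal f * star V).PosSemidef := by
  rw [Matrix.star_eq_conjTranspose]
  exact (Matrix.posSemidef_diagonal_iff.mpr hf).mul_mul_conjTranspose_same V

lemma sqrt_of_conj {P : Matrix n n ℝ} (hP : P.PosSemidef) {V : Matrix n n ℝ}
    (hV : V ∈ Matrix.unitaryGroup n ℝ) {f : n → ℝ} (hf : ∀ i, 0 ≤ f i)
    (hPV : P = V * diagonal f * star V) :
    hP.sqrt = V * diagonal (fun i => Real.sqrt (f i)) * star V := by
  have h1 : star V * V = 1 := Matrix.mem_unitaryGroup_iff'.mp hV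
  refine ((conj_psd V (fun i => Real.sqrt_nonneg _)).eq_sqrt_of_sq_eq hP ?_).symm
  rw [pow_two, hPV]
  calc (V * diagonal (fun i => Real.sqrt (f i)) * star V) *
        (V * diagonal (fun i => Real.sqrt (f i)) * star V)
      = V * (diagonal (fun i => Real.sqrt (f i)) * ((star V * V) *
          diagonal (fun i => Real.sqrt (f i)))) * star V := by
        simp only [Matrix.mul_assoc]
    _ = V * (diagonal (fun i => Real.sqrt (f i)) * diagonal (fun i => Real.sqrt (f i))) * star V := by
        rw [h1, one_mul]
    _ = V * diagonal f * star V := by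
        rw [Matrix.diagonal_mul_diagonal,
          show (fun i => Real.sqrt (f i) * Real.sqrt (f i)) = f from
            funext fun i => Real.mul_self_sqrt (hf i)]

lemma trace_conj {V : Matrix n n ℝ} (hV : V ∈ Matrix.unitaryGroup n ℝ) (f : n → ℝ) :
    (V * diagonal f * star V).trace = ∑ i, f i := by
  rw [Matrix.trace_mul_cycle, Matrix.mem_unitaryGroup_iff'.mp hV, one_mul,
    Matrix.trace_diagonal]

lemma spectral_real {P : Matrix n n ℝ} (hP : P.IsHermitian) :
    P = (hP.eigenvectorUnitary : Matrix n n ℝ) * diagonal hP.eigenvalues *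
      star (hP.eigenvectorUnitary : Matrix n n ℝ) := by
  have h := hP.spectral_theorem
  rwa [show RCLike.ofReal ∘ hP.eigenvalues = hP.eigenvalues by
    funext i; simp [RCLike.ofReal_real_eq_id]] at h

lemma trace_sqrt_eq {P : Matrix n n ℝ} (hP : P.PosSemidef) :
    hP.sqrt.trace = ∑ i, Real.sqrt (hP.1.eigenvalues i) := by
  rw [sqrt_of_conj hP (hP.1.eigenvectorUnitary).2 hP.eigenvalues_nonneg (spectral_real hP.1),
    trace_conj (hP.1.eigenvectorUnitary).2]

lemma trace_sqrt_nonneg {P : Matrix n n ℝ} (hP : P.PosSemidef) : 0 ≤ hP.sqrt.trace := by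
  rw [trace_sqrt_eq]
  exact Finset.sum_nonneg fun i _ => Real.sqrt_nonneg _

end helpers

section helpers2
variable {n : Type*} [Fintype n] [DecidableEq n]

lemma nuclearNorm_eq {A : Matrix n n ℝ} (h : (Aᵀ * A).PosSemidef) :
    nuclearNorm A = h.sqrt.trace := by
  rw [trace_sqrt_eq h, nuclearNorm]
  rfl

lemma nuclearNorm_nonneg (A : Matrix n n ℝ) : 0 ≤ nuclearNorm A :=
  Finset.sum_nonneg fun i _ => Real.sqrt_nonneg _

lemma exists_sign_matrix {Δ : Matrix n n ℝ} (hΔ : Δ.IsHermitian) :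
    ∃ C : Matrix n n ℝ, Cᵀ = C ∧ Cᵀ * C = 1 ∧ (C * Δ).trace = nuclearNorm Δ := by
  set V : Matrix n n ℝ := (hΔ.eigenvectorUnitary : Matrix n n ℝ) with hVdef
  have hV : V ∈ Matrix.unitaryGroup n ℝ := (hΔ.eigenvectorUnitary).2
  have hVt : star V = Vᵀ := star_eq_transpose' V
  have hVV : Vᵀ * V = 1 := by rw [← hVt]; exact Matrix.mem_unitaryGroup_iff'.mp hV
  have hVV' : V * Vᵀ = 1 := by rw [← hVt]; exact Matrix.mem_unitaryGroup_iff.mp hV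
  set lam := hΔ.eigenvalues with hlam
  set g : n → ℝ := fun i => if lam i < 0 then (-1 : ℝ) else 1 with hg
  have hg2 : ∀ i, g i * g i = 1 := by
    intro i; by_cases h : lam i < 0 <;> simp [hg, h]
  have hglam : ∀ i, g i * lam i = |lam i| := by
    intro i
    by_cases h : lam i < 0
    · simp [hg, h, abs_of_neg h]
    · simp [hg, h, abs_of_nonneg (not_lt.mp h)]
  have hspec : Δ = V * diagonal lam * Vᵀ := by
    have := spectral_real hΔ; rwa [hVt] at this
  refine ⟨V * diagonal g * Vᵀ, ?_, ?_, ?_⟩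
  · simp only [Matrix.transpose_mul, Matrix.transpose_transpose, Matrix.diagonal_transpose,
      Matrix.mul_assoc]
  · calc (V * diagonal g * Vᵀ)ᵀ * (V * diagonal g * Vᵀ)
        = V * diagonal g * Vᵀ * (V * diagonal g * Vᵀ) := by
          simp only [Matrix.transpose_mul, Matrix.transpose_transpose,
            Matrix.diagonal_transpose, Matrix.mul_assoc]
      _ = V * (diagonal g * ((Vᵀ * V) * (diagonal g * Vᵀ))) := by
          simp only [Matrix.mul_assoc]
      _ = 1 := by
          rw [hVV, one_mul, ← Matrix.mul_assoc (diagonal g), Matrix.diagonal_mul_diagonal,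
            show (fun i => g i * g i) = fun _ => (1 : ℝ) from funext hg2]
          rw [Matrix.diagonal_one, one_mul, hVV']
  · have hmul : V * diagonal g * Vᵀ * Δ = V * (diagonal g * diagonal lam) * Vᵀ := by
      rw [hspec]
      calc V * diagonal g * Vᵀ * (V * diagonal lam * Vᵀ)
          = V * (diagonal g * ((Vᵀ * V) * (diagonal lam * Vᵀ))) := by
            simp only [Matrix.mul_assoc]
        _ = V * (diagonal g * diagonal lam) * Vᵀ := by
            rw [hVV, one_mul]
            simp only [Matrix.mul_assoc]
    rw [hmul, Matrix.diagonal_mul_diagonal, ← hVt, trace_conj hV]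
    -- now: ∑ i, g i * lam i = nuclearNorm Δ
    have hΔΔ : (Δᵀ * Δ).PosSemidef := psd_transpose_mul_self Δ
    have hDt : Δᵀ = Δ := by rw [← ct_eq_transpose, hΔ.eq]
    have hsq : Δᵀ * Δ = V * diagonal (fun i => lam i ^ 2) * star V := by
      rw [hDt, hVt]
      rw [hspec]
      calc V * diagonal lam * Vᵀ * (V * diagonal lam * Vᵀ)
          = V * (diagonal lam * ((Vᵀ * V) * (diagonal lam * Vᵀ))) := by
            simp only [Matrix.mul_assoc]
        _ = V * (diagonal lam * diagonal lam) * Vᵀ := by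
            rw [hVV, one_mul]
            simp only [Matrix.mul_assoc]
        _ = V * diagonal (fun i => lam i ^ 2) * Vᵀ := by
            rw [Matrix.diagonal_mul_diagonal,
              show (fun i => lam i * lam i) = (fun i => lam i ^ 2) from
                funext fun i => (sq (lam i)).symm]
    rw [nuclearNorm_eq hΔΔ,
      sqrt_of_conj hΔΔ hV (fun i => sq_nonneg _) hsq, trace_conj hV]
    congr 1
    funext i
    rw [Real.sqrt_sq_eq_abs, hglam i]

end helpers2


section polar

lemma exists_orthogonal_trace {m : ℕ} (B : Matrix (Fin m) (Fin m) ℝ)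
    (hB : (Bᵀ * B).PosSemidef) :
    ∃ U : Matrix (Fin m) (Fin m) ℝ,
      Uᵀ * U = 1 ∧ U * Uᵀ = 1 ∧ (Bᵀ * U).trace = ∑ i, Real.sqrt (hB.1.eigenvalues i) := by
  classical
  set lam := hB.1.eigenvalues with hlamdef
  have hlam : ∀ i, 0 ≤ lam i := hB.eigenvalues_nonneg
  set v : Fin m → EuclideanSpace ℝ (Fin m) := fun i => hB.1.eigenvectorBasis i with hvdef
  set w : Fin m → EuclideanSpace ℝ (Fin m) := fun i => WithLp.toLp 2 (B *ᵥ (v i : Fin m → ℝ) : Fin m → ℝ)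
    with hwdef
  have hvij : ∀ i j, dotProduct (v i : Fin m → ℝ) (v j) = if i = j then 1 else 0 := by
    intro i j
    have := orthonormal_iff_ite.mp hB.1.eigenvectorBasis.orthonormal i j
    simpa [PiLp.inner_apply, RCLike.inner_apply, conj_trivial, dotProduct, mul_comm] using this
  have hwv : ∀ i j, dotProduct (w i : Fin m → ℝ) (w j) = if i = j then lam i else 0 := by
    intro i j
    have h1 : dotProduct (v i : Fin m → ℝ) ((Bᵀ * B) *ᵥ (v j : Fin m → ℝ)) =
        dotProduct (w i : Fin m → ℝ) (w j) := by
      calc dotProduct (v i : Fin m → ℝ) ((Bᵀ * B) *ᵥ (v j : Fin m → ℝ))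
          = dotProduct (v i : Fin m → ℝ) (Bᵀ *ᵥ (B *ᵥ (v j : Fin m → ℝ))) := by
            rw [Matrix.mulVec_mulVec]
        _ = dotProduct ((v i : Fin m → ℝ) ᵥ* Bᵀ) (B *ᵥ (v j : Fin m → ℝ)) := by
            rw [dotProduct_mulVec]
        _ = dotProduct (w i : Fin m → ℝ) (w j) := by
            rw [Matrix.vecMul_transpose]
    rw [← h1]
    have h2 : (Bᵀ * B) *ᵥ (v j : Fin m → ℝ) = lam j • (v j : Fin m → ℝ) :=
      hB.1.mulVec_eigenvectorBasis j
    rw [h2, dotProduct_smul, hvij i j]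
    by_cases h : i = j <;> simp [h, smul_eq_mul]
  set s : Set (Fin m) := {i | lam i ≠ 0} with hsdef
  set u : Fin m → EuclideanSpace ℝ (Fin m) := fun i => (Real.sqrt (lam i))⁻¹ • w i with hudef
  have hwinner : ∀ i j, (inner ℝ (w i) (w j) : ℝ) = if i = j then lam i else 0 := by
    intro i j
    rw [← hwv i j]
    simp [PiLp.inner_apply, RCLike.inner_apply, conj_trivial, dotProduct, mul_comm]
  have hu : Orthonormal ℝ (s.restrict u) := by
    rw [orthonormal_iff_ite]
    rintro ⟨i, hi⟩ ⟨j, hj⟩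
    simp only [Set.restrict_apply, hudef]
    change inner ℝ ((Real.sqrt (lam i))⁻¹ • w i) ((Real.sqrt (lam j))⁻¹ • w j) = _
    rw [real_inner_smul_left, real_inner_smul_right, hwinner i j]
    rcases eq_or_ne i j with h | h
    · subst h
      have hpos : 0 < lam i := lt_of_le_of_ne (hlam i) (Ne.symm hi)
      have hs : Real.sqrt (lam i) ≠ 0 := by positivity
      simp only [if_pos rfl]
      simp only [if_true]
      rw [show lam i = Real.sqrt (lam i) * Real.sqrt (lam i) from
        (Real.mul_self_sqrt (hlam i)).symm]
      field_simp
      rw [Real.sqrt_sq (Real.sqrt_nonneg _)]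
    · rw [if_neg h, if_neg (by simpa [Subtype.mk.injEq] using h)]
      ring
  have hcard : Module.finrank ℝ (EuclideanSpace ℝ (Fin m)) = Fintype.card (Fin m) :=
    finrank_euclideanSpace
  obtain ⟨b, hb⟩ := hu.exists_orthonormalBasis_extension_of_card_eq hcard
  set V : Matrix (Fin m) (Fin m) ℝ := (hB.1.eigenvectorUnitary : Matrix (Fin m) (Fin m) ℝ)
    with hVdef
  have hV : V ∈ Matrix.unitaryGroup (Fin m) ℝ := (hB.1.eigenvectorUnitary).2
  have hVt : star V = Vᵀ := by
    rw [Matrix.star_eq_conjTranspose]; ext i j; simp [Matrix.conjTranspose_apply]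
  have hVV : Vᵀ * V = 1 := by rw [← hVt]; exact Matrix.mem_unitaryGroup_iff'.mp hV
  have hVV' : V * Vᵀ = 1 := by rw [← hVt]; exact Matrix.mem_unitaryGroup_iff.mp hV
  set CU : Matrix (Fin m) (Fin m) ℝ := Matrix.of (fun k i => b i k) with hCUdef
  have hCU : CUᵀ * CU = 1 := by
    ext i j
    have := orthonormal_iff_ite.mp b.orthonormal i j
    rw [PiLp.inner_apply] at this
    simp only [RCLike.inner_apply, conj_trivial] at this
    simp only [Matrix.mul_apply, Matrix.transpose_apply, hCUdef, Matrix.of_apply,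
      Matrix.one_apply]
    simpa [mul_comm] using this
  have hCU' : CU * CUᵀ = 1 := mul_eq_one_comm.mp hCU
  refine ⟨CU * Vᵀ, ?_, ?_, ?_⟩
  · have h1 : (CU * Vᵀ)ᵀ * (CU * Vᵀ) = V * ((CUᵀ * CU) * Vᵀ) := by
      simp only [Matrix.transpose_mul, Matrix.transpose_transpose, Matrix.mul_assoc]
    rw [h1, hCU, one_mul, hVV']
  · have h1 : (CU * Vᵀ) * (CU * Vᵀ)ᵀ = CU * ((Vᵀ * V) * CUᵀ) := by
      simp only [Matrix.transpose_mul, Matrix.transpose_transpose, Matrix.mul_assoc]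
    rw [h1, hVV, one_mul, hCU']
  · rw [← Matrix.mul_assoc, Matrix.trace_mul_cycle]
    have hentry : ∀ i, (Vᵀ * Bᵀ * CU) i i = Real.sqrt (lam i) := by
      intro i
      have hrow : ∀ k, (Vᵀ * Bᵀ) i k = w i k := by
        intro k
        simp only [Matrix.mul_apply, Matrix.transpose_apply]
        rw [hwdef]
        simp only [Matrix.mulVec, dotProduct]
        refine Finset.sum_congr rfl fun l _ => ?_
        rw [hVdef]
        simp only [Matrix.IsHermitian.eigenvectorUnitary_apply]
        rw [mul_comm]
      have : (Vᵀ * Bᵀ * CU) i i = ∑ k, w i k * b i k := by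
        rw [Matrix.mul_apply]
        exact Finset.sum_congr rfl fun k _ => by rw [hrow k]; rfl
      rw [this]
      by_cases hi : i ∈ s
      · have hbi : b i = u i := hb i hi
        have hpos : 0 < lam i := lt_of_le_of_ne (hlam i) (Ne.symm hi)
        have hsum : ∑ k, w i k * w i k = lam i := by
          have := hwv i i; simp only [if_pos rfl] at this
          simpa [dotProduct] using this
        have : ∑ k, w i k * b i k = (Real.sqrt (lam i))⁻¹ * ∑ k, w i k * w i k := by
          rw [hbi, hudef, Finset.mul_sum]
          refine Finset.sum_congr rfl fun k _ => ?_
          simp only [PiLp.smul_apply, smul_eq_mul]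
          ring
        rw [this, hsum]
        rw [show lam i = Real.sqrt (lam i) * Real.sqrt (lam i) from
          (Real.mul_self_sqrt (hlam i)).symm]
        have hs : Real.sqrt (lam i) ≠ 0 := by positivity
        field_simp
        rw [Real.sqrt_sq (Real.sqrt_nonneg _)]
      · have hzero : lam i = 0 := by simpa [hsdef] using hi
        have hsum : ∑ k, w i k * w i k = 0 := by
          have := hwv i i; simp only [if_pos rfl] at this
          rw [hzero] at this
          simpa [dotProduct] using this
        have hwk : ∀ k, w i k = 0 := by
          intro k
          have h2 : ∀ k ∈ Finset.univ, (0:ℝ) ≤ w i k * w i k := fun k _ => mul_self_nonneg _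
          have := (Finset.sum_eq_zero_iff_of_nonneg h2).mp hsum k (Finset.mem_univ k)
          exact mul_self_eq_zero.mp this
        simp [hwk, hzero]
    rw [show (Vᵀ * Bᵀ * CU).trace = ∑ i, (Vᵀ * Bᵀ * CU) i i from rfl]
    exact Finset.sum_congr rfl fun i _ => hentry i

end polar

section frob
open Matrix
variable {n : Type*} [Fintype n] [DecidableEq n]

lemma frobSq_eq_trace (A : Matrix n n ℝ) : frobSq A = (Aᵀ * A).trace := by
  simp only [frobSq, Matrix.trace, Matrix.diag, Matrix.mul_apply, Matrix.transpose_apply,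
    pow_two]
  exact Finset.sum_comm

lemma frobSq_ne_zero {A : Matrix n n ℝ} (h : A ≠ 0) : frobSq A ≠ 0 := by
  intro h0
  apply h
  have h' := (Finset.sum_eq_zero_iff_of_nonneg
    (fun i _ => Finset.sum_nonneg fun j _ => sq_nonneg (A i j))).mp h0
  ext i j
  have := (Finset.sum_eq_zero_iff_of_nonneg (fun j _ => sq_nonneg (A i j))).mp
    (h' i (Finset.mem_univ i)) j (Finset.mem_univ j)
  simpa using (pow_eq_zero_iff two_ne_zero).mp this

lemma trace_sq_le (A G : Matrix n n ℝ) :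
    ((Aᵀ * G).trace) ^ 2 ≤ frobSq A * frobSq G := by
  have h1 : (Aᵀ * G).trace = ∑ p : n × n, A p.1 p.2 * G p.1 p.2 := by
    rw [Fintype.sum_prod_type]
    simp only [Matrix.trace, Matrix.diag, Matrix.mul_apply, Matrix.transpose_apply]
    exact Finset.sum_comm
  have h2 : frobSq A = ∑ p : n × n, A p.1 p.2 ^ 2 := by
    rw [Fintype.sum_prod_type]; rfl
  have h3 : frobSq G = ∑ p : n × n, G p.1 p.2 ^ 2 := by
    rw [Fintype.sum_prod_type]; rfl
  rw [h1, h2, h3]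
  exact Finset.sum_mul_sq_le_sq_mul_sq _ _ _

lemma trace_conj_self (C R : Matrix n n ℝ) :
    (Rᵀ * (C * R)).trace = (C * (R * Rᵀ)).trace := by
  rw [← Matrix.mul_assoc, Matrix.trace_mul_cycle, Matrix.trace_mul_comm]

end frob

/-- For real symmetric positive semidefinite `M × M` matrices `K_X ≠ K_Y`
with `α = Tr K_X`, `β = Tr K_Y` and participation ratio
`R_Δ = ‖K_X − K_Y‖_*²/‖K_X − K_Y‖_F²`, the squared Bures distance
`d_B² = Tr K_X + Tr K_Y − 2 F(K_X, K_Y)` satisfies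
`d_B² ≥ (α + β) − √((α + β)² − R_Δ ‖K_X − K_Y‖_F²)`. -/
theorem bures_distance_sq_lower_bound
    {M : ℕ} (KX KY : Matrix (Fin M) (Fin M) ℝ)
    (hX : KX.PosSemidef) (hY : KY.PosSemidef) (hne : KX ≠ KY)
    (α β RΔ : ℝ) (hα : α = KX.trace) (hβ : β = KY.trace)
    (hRΔ : RΔ = nuclearNorm (KX - KY) ^ 2 / frobSq (KX - KY)) :
    (α + β) - Real.sqrt ((α + β) ^ 2 - RΔ * frobSq (KX - KY)) ≤
      KX.trace + KY.trace - 2 * fidelity hX hY := by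
  subst hα hβ hRΔ
  set S := hX.sqrt with hSdef
  set T := hY.sqrt with hTdef
  have hS : Sᵀ = S := by rw [← ct_eq_transpose]; exact hX.posSemidef_sqrt.isHermitian.eq
  have hT : Tᵀ = T := by rw [← ct_eq_transpose]; exact hY.posSemidef_sqrt.isHermitian.eq
  have hSS : S * S = KX := hX.sqrt_mul_self
  have hTT : T * T = KY := hY.sqrt_mul_self
  set B := T * S with hBdef
  have hBt : Bᵀ = S * T := by rw [hBdef, Matrix.transpose_mul, hS, hT]
  have hBtB : Bᵀ * B = S * KY * S := by
    rw [hBt, hBdef, ← hTT]; simp only [Matrix.mul_assoc]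
  have hP : (Bᵀ * B).PosSemidef := by rw [hBtB]; exact sqrt_mul_mul_sqrt_posSemidef hX hY
  obtain ⟨U, hU1, hU2, hU3⟩ := exists_orthogonal_trace B hP
  have hFtr : fidelity hX hY = ∑ i, Real.sqrt (hP.1.eigenvalues i) := by
    rw [fidelity, show (sqrt_mul_mul_sqrt_posSemidef hX hY).sqrt = hP.sqrt from
      (sqrt_congr hBtB hP (sqrt_mul_mul_sqrt_posSemidef hX hY)).symm, trace_sqrt_eq]
  have hF0 : 0 ≤ fidelity hX hY := by
    rw [hFtr]; exact Finset.sum_nonneg fun i _ => Real.sqrt_nonneg _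
  have hBU : (Bᵀ * U).trace = fidelity hX hY := by rw [hU3, hFtr]
  set Q := T * U with hQdef
  have hQt : Qᵀ = Uᵀ * T := by rw [hQdef, Matrix.transpose_mul, hT]
  have htrQQ : (Qᵀ * Q).trace = KY.trace := by
    rw [hQt, hQdef]
    have e : Uᵀ * T * (T * U) = Uᵀ * KY * U := by
      rw [← hTT]; simp only [Matrix.mul_assoc]
    rw [e, Matrix.trace_mul_cycle, hU2, one_mul]
  have hQQt : Q * Qᵀ = KY := by
    rw [hQt, hQdef]
    have e : T * U * (Uᵀ * T) = T * (U * Uᵀ) * T := by simp only [Matrix.mul_assoc]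
    rw [e, hU2, mul_one, hTT]
  have htrPP : (Sᵀ * S).trace = KX.trace := by rw [hS, hSS]
  have htrPQ : (Sᵀ * Q).trace = fidelity hX hY := by
    rw [hS, hQdef, ← Matrix.mul_assoc, ← hBt, hBU]
  have htrQP : (Qᵀ * S).trace = fidelity hX hY := by
    rw [show Qᵀ * S = (Sᵀ * Q)ᵀ from by
      rw [Matrix.transpose_mul Sᵀ Q, Matrix.transpose_transpose], Matrix.trace_transpose, htrPQ]
  have hΔh : (KX - KY).IsHermitian := hX.1.sub hY.1
  obtain ⟨C, hC1, hC2, hC3⟩ := exists_sign_matrix hΔh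
  set N := nuclearNorm (KX - KY) with hNdef
  have tcross : (Sᵀ * (C * Q)).trace = (Qᵀ * (C * S)).trace := by
    rw [← Matrix.trace_transpose (Sᵀ * (C * Q))]
    congr 1
    simp only [Matrix.transpose_mul, Matrix.transpose_transpose, hC1, Matrix.mul_assoc]
  have t1 : (Sᵀ * (C * S)).trace = (C * KX).trace := by
    rw [trace_conj_self, hS, hSS]
  have t2 : (Qᵀ * (C * Q)).trace = (C * KY).trace := by
    rw [trace_conj_self, hQQt]
  have hexp : ((S + Q)ᵀ * (C * (S - Q))).trace = N := by
    have e1 : (S + Q)ᵀ * (C * (S - Q)) =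
        Sᵀ * (C * S) - Sᵀ * (C * Q) + (Qᵀ * (C * S) - Qᵀ * (C * Q)) := by
      rw [Matrix.transpose_add, Matrix.mul_sub, Matrix.add_mul, Matrix.mul_sub, Matrix.mul_sub]
    have e2 : (C * KX).trace - (C * KY).trace = N := by
      rw [← Matrix.trace_sub, ← Matrix.mul_sub, hC3]
    rw [e1, Matrix.trace_add, Matrix.trace_sub, Matrix.trace_sub, tcross, t1, t2]
    linarith [e2]
  have hfplus : frobSq (S + Q) = KX.trace + KY.trace + 2 * fidelity hX hY := by
    rw [frobSq_eq_trace]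
    have e : (S + Q)ᵀ * (S + Q) = Sᵀ * S + (Sᵀ * Q + (Qᵀ * S + Qᵀ * Q)) := by
      rw [Matrix.transpose_add, Matrix.add_mul, Matrix.mul_add, Matrix.mul_add]
      abel
    rw [e, Matrix.trace_add, Matrix.trace_add, Matrix.trace_add, htrPP, htrQQ, htrPQ, htrQP]
    ring
  have hfminus : frobSq (S - Q) = KX.trace + KY.trace - 2 * fidelity hX hY := by
    rw [frobSq_eq_trace]
    have e : (S - Q)ᵀ * (S - Q) = Sᵀ * S - (Sᵀ * Q + (Qᵀ * S - Qᵀ * Q)) := by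
      rw [Matrix.transpose_sub, Matrix.sub_mul, Matrix.mul_sub, Matrix.mul_sub]
      abel
    rw [e, Matrix.trace_sub, Matrix.trace_add, Matrix.trace_sub, htrPP, htrQQ, htrPQ, htrQP]
    ring
  have hfC : frobSq (C * (S - Q)) = frobSq (S - Q) := by
    rw [frobSq_eq_trace, frobSq_eq_trace]
    congr 1
    have e : (C * (S - Q))ᵀ * (C * (S - Q)) = (S - Q)ᵀ * ((Cᵀ * C) * (S - Q)) := by
      simp only [Matrix.transpose_mul, Matrix.mul_assoc]
    rw [e, hC2, one_mul]
  have hN0 : 0 ≤ N := nuclearNorm_nonneg _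
  have hCS2 : N ^ 2 ≤ frobSq (S + Q) * frobSq (C * (S - Q)) := by
    rw [← hexp]; exact trace_sq_le _ _
  have key : N ^ 2 ≤ (KX.trace + KY.trace) ^ 2 - (2 * fidelity hX hY) ^ 2 := by
    rw [hfC, hfplus, hfminus] at hCS2
    nlinarith [hCS2]
  have hFle : 2 * fidelity hX hY ≤
      Real.sqrt ((KX.trace + KY.trace) ^ 2 - N ^ 2) := by
    exact Real.le_sqrt_of_sq_le (by nlinarith [key])
  have hΔne : KX - KY ≠ 0 := sub_ne_zero_of_ne hne
  have hfrob : frobSq (KX - KY) ≠ 0 := frobSq_ne_zero hΔne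
  rw [div_mul_cancel₀ _ hfrob]
  exact sub_le_sub_left hFle _
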